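/- The number of symmetric numerical semigroups of genus g is at most C(g−1, ⌈(g−1)/2⌉). -/

import Mathlib

open Finset

def pathsF : ℕ → ℕ → Finset (List Bool)
  | 0, _ => {[]}
  | (n+1), d => ((pathsF n (d+1)).image (List.cons true)) ∪
      (if d = 0 then ∅ else (pathsF n (d-1)).image (List.cons false))

lemma pathsF_card_succ (n d : ℕ) :
    (pathsF (n+1) d).card =
      (pathsF n (d+1)).card + if d = 0 then 0 else (pathsF n (d-1)).card := by
  rw [pathsF, card_union_of_disjoint, card_image_of_injective _ List.cons_injective]
  · congr 1
    split
    · simp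
    · rw [card_image_of_injective _ List.cons_injective]
  · rw [Finset.disjoint_left]
    rintro l hl hr
    simp only [Finset.mem_image] at hl
    obtain ⟨a, -, rfl⟩ := hl
    split at hr
    · simp at hr
    · simp only [Finset.mem_image] at hr
      obtain ⟨b, -, h⟩ := hr
      simp at h

lemma sum_range_choose_ge (n : ℕ) : ∀ m : ℕ, n ≤ m → ∑ k ∈ range (m+1), n.choose k = 2^n := by
  intro m
  induction m with
  | zero => intro h; interval_cases n; simp
  | succ m ih =>
    intro h
    rcases Nat.lt_or_ge m n with hm | hm
    · have : n = m + 1 := by omega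
      subst this
      exact Nat.sum_range_choose (m+1)
    · rw [Finset.sum_range_succ, ih hm, Nat.choose_eq_zero_of_lt (by omega), add_zero]

lemma sum_Icc_zero_choose (n m : ℕ) (h : n ≤ m) :
    ∑ k ∈ Icc 0 m, n.choose k = 2^n := by
  have h1 : Icc 0 m = range (m+1) := by ext x; simp
  rw [h1]
  exact sum_range_choose_ge n m h

lemma sum_Icc_choose_shift (n a b : ℕ) (ha : 1 ≤ a) (hab : a ≤ b) :
    ∑ k ∈ Icc a b, n.choose (k - 1) = ∑ k ∈ Icc (a-1) (b-1), n.choose k := by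
  have hh : Icc a b = Finset.map (addRightEmbedding 1) (Icc (a-1) (b-1)) := by
    rw [Finset.map_add_right_Icc]
    congr 1 <;> omega
  rw [hh, Finset.sum_map]
  apply Finset.sum_congr rfl
  intro x hx
  simp [addRightEmbedding]

lemma pathsF_card (n : ℕ) : ∀ d : ℕ,
    (pathsF n d).card = ∑ k ∈ Icc ((n - d)/2) ((n + d)/2), n.choose k := by
  induction n with
  | zero =>
    intro d
    show ({[]} : Finset (List Bool)).card = _
    have : (0 - d)/2 = 0 := by omega
    rw [this]
    rw [Finset.card_singleton]
    rw [eq_comm]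
    calc ∑ k ∈ Icc 0 ((0+d)/2), Nat.choose 0 k = 2^0 := sum_Icc_zero_choose 0 _ (by omega)
    _ = 1 := by norm_num
  | succ n ih =>
    intro d
    rw [pathsF_card_succ, ih, ih]
    rcases Nat.eq_zero_or_pos d with rfl | hd
    · -- d = 0
      rw [if_pos rfl, add_zero]
      rcases Nat.eq_zero_or_pos n with rfl | hn
      · decide
      · -- n ≥ 1
        set j := (n+1)/2 - 1 with hj
        have h1 : (n - 1)/2 = j := by omega
        have h2 : (n + 1)/2 = j + 1 := by omega
        have h3 : (n + 1 - 0)/2 = j + 1 := by omega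
        rw [h1, h2, h3, Finset.Icc_self, Finset.sum_singleton,
          Finset.sum_Icc_succ_top (by omega), Finset.Icc_self, Finset.sum_singleton,
          Nat.choose_succ_succ]
    · rw [if_neg (by omega)]
      rcases Nat.lt_or_ge n d with hnd | hnd
      · -- d ≥ n + 1 : all sums full
        have e1 : (n + 1 - d)/2 = 0 := by omega
        have e2 : (n - (d+1))/2 = 0 := by omega
        have e3 : (n - (d-1))/2 = 0 := by omega
        rw [e1, e2, e3, sum_Icc_zero_choose _ _ (by omega), sum_Icc_zero_choose _ _ (by omega),
          sum_Icc_zero_choose _ _ (by omega)]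
        ring
      · rcases Nat.eq_or_lt_of_le hnd with heq | hdn
        · -- d = n
          subst heq
          have e1 : (d + 1 - d)/2 = 0 := by omega
          have e2 : (d - (d+1))/2 = 0 := by omega
          have e3 : (d - (d-1))/2 = 0 := by omega
          have e4 : (d + 1 + d)/2 = d := by omega
          have e5 : (d + (d-1))/2 = d - 1 := by omega
          rw [e1, e2, e3, e4, e5, sum_Icc_zero_choose _ _ (by omega)]
          have hn1 : 1 ≤ d := hd
          have t1 : ∑ k ∈ Icc 0 (d+1), (d+1).choose k = 2^(d+1) :=
            sum_Icc_zero_choose _ _ (by omega)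
          rw [Finset.sum_Icc_succ_top (by omega)] at t1
          have t2 : ∑ k ∈ Icc 0 d, d.choose k = 2^d := sum_Icc_zero_choose _ _ (by omega)
          have hn' : d = (d - 1) + 1 := by omega
          rw [hn', Finset.sum_Icc_succ_top (by omega), ← hn'] at t2
          simp only [Nat.choose_self] at t1 t2
          omega
        · -- 1 ≤ d ≤ n - 1
          set a := (n + 1 - d)/2 with hadef
          set b := (n + 1 + d)/2 with hbdef
          have ha1 : 1 ≤ a := by omega
          have hab : a ≤ b := by omega
          have hab' : a ≤ b - 1 := by omega
          have e1 : (n - (d+1))/2 = a - 1 := by omega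
          have e2 : (n + (d+1))/2 = b := by omega
          have e3 : (n - (d-1))/2 = a := by omega
          have e4 : (n + (d-1))/2 = b - 1 := by omega
          rw [e1, e2, e3, e4]
          have pascal : ∑ k ∈ Icc a b, (n+1).choose k
              = ∑ k ∈ Icc a b, (n.choose (k-1) + n.choose k) := by
            apply Finset.sum_congr rfl
            intro k hk
            have hk1 : 1 ≤ k := by
              simp only [Finset.mem_Icc] at hk; omega
            have : k = (k - 1) + 1 := by omega
            rw [this, Nat.choose_succ_succ, Nat.succ_eq_add_one, ← this]
          rw [pascal, Finset.sum_add_distrib, sum_Icc_choose_shift n a b ha1 hab]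
          -- now: ∑ Icc (a-1) (b-1) + ∑ Icc a b = ∑ Icc (a-1) b + ∑ Icc a (b-1)
          have hb : b = (b - 1) + 1 := by omega
          have s1 : ∑ k ∈ Icc (a-1) b, n.choose k
              = ∑ k ∈ Icc (a-1) (b-1), n.choose k + n.choose b := by
            rw [hb, Finset.sum_Icc_succ_top (by omega), ← hb]
          have s2 : ∑ k ∈ Icc a b, n.choose k
              = ∑ k ∈ Icc a (b-1), n.choose k + n.choose b := by
            rw [hb, Finset.sum_Icc_succ_top (by omega), ← hb]
          omega

section Semigroup

variable {Λ : Set ℕ} {g : ℕ}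

lemma sgB1 (hfin : Λᶜ.Finite) (hinf : sInf {m : ℕ | ∀ n, m ≤ n → n ∈ Λ} = 2*g) :
    ∀ n, 2*g ≤ n → n ∈ Λ := by
  have hne : {m : ℕ | ∀ n, m ≤ n → n ∈ Λ}.Nonempty := by
    obtain ⟨N, hN⟩ := hfin.bddAbove
    refine ⟨N+1, fun n hn => ?_⟩
    by_contra h
    have := hN (Set.mem_compl h)
    omega
  have := Nat.sInf_mem hne
  rw [hinf] at this
  exact this

lemma sgB2 (hg : 1 ≤ g) (hfin : Λᶜ.Finite)
    (hinf : sInf {m : ℕ | ∀ n, m ≤ n → n ∈ Λ} = 2*g) : 2*g - 1 ∉ Λ := by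
  intro h
  have hmem : 2*g - 1 ∈ {m : ℕ | ∀ n, m ≤ n → n ∈ Λ} := by
    intro n hn
    rcases Nat.eq_or_lt_of_le hn with heq | hlt
    · rwa [← heq]
    · exact sgB1 hfin hinf n (by omega)
  have := Nat.sInf_le hmem
  rw [hinf] at this
  omega

lemma sgFwd (hg : 1 ≤ g) (hadd : ∀ a b, a ∈ Λ → b ∈ Λ → a + b ∈ Λ) (hfin : Λᶜ.Finite)
    (hinf : sInf {m : ℕ | ∀ n, m ≤ n → n ∈ Λ} = 2*g) :
    ∀ x ∈ Λ, x < 2*g → 2*g - 1 - x ∉ Λ := by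
  intro x hx hlt h
  have := hadd x (2*g-1-x) hx h
  have heq : x + (2*g-1-x) = 2*g-1 := by omega
  rw [heq] at this
  exact sgB2 hg hfin hinf this

lemma sgBwd (hg : 1 ≤ g) (hadd : ∀ a b, a ∈ Λ → b ∈ Λ → a + b ∈ Λ) (hfin : Λᶜ.Finite)
    (hcard : Λᶜ.ncard = g) (hinf : sInf {m : ℕ | ∀ n, m ≤ n → n ∈ Λ} = 2*g) :
    ∀ t, t ∉ Λ → 2*g - 1 - t ∈ Λ := by
  classical
  set Gf := hfin.toFinset with hGf
  have hGmem : ∀ x, x ∈ Gf ↔ x ∉ Λ := fun x => hfin.mem_toFinset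
  have hGcard : Gf.card = g := by rw [← hcard, Set.ncard_eq_toFinset_card Λᶜ hfin]
  have hGsub : Gf ⊆ range (2*g) := by
    intro x hx
    rw [Finset.mem_range]
    by_contra h
    exact (hGmem x).1 hx (sgB1 hfin hinf x (by omega))
  set Nf := range (2*g) \ Gf with hNf
  have hNcard : Nf.card = g := by
    rw [hNf, Finset.card_sdiff_of_subset hGsub, Finset.card_range, hGcard]
    omega
  have himg : Nf.image (fun x => 2*g-1-x) ⊆ Gf := by
    intro t ht
    rw [Finset.mem_image] at ht
    obtain ⟨x, hx, rfl⟩ := ht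
    rw [hNf, Finset.mem_sdiff, Finset.mem_range] at hx
    have hxΛ : x ∈ Λ := by
      by_contra h
      exact hx.2 ((hGmem x).2 h)
    exact (hGmem _).2 (sgFwd hg hadd hfin hinf x hxΛ hx.1)
  have hinj : Set.InjOn (fun x => 2*g-1-x) ↑Nf := by
    intro x hx y hy hxy
    simp only [Finset.coe_sdiff, Set.mem_diff, Finset.mem_coe, Finset.mem_range,
      hNf, Finset.coe_range, Set.mem_Iio] at hx hy
    simp only at hxy
    omega
  have heq : Nf.image (fun x => 2*g-1-x) = Gf := by
    apply Finset.eq_of_subset_of_card_le himg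
    rw [Finset.card_image_of_injOn hinj, hNcard, hGcard]
  intro t ht
  have htG : t ∈ Gf := (hGmem t).2 ht
  rw [← heq, Finset.mem_image] at htG
  obtain ⟨x, hx, hxt⟩ := htG
  rw [hNf, Finset.mem_sdiff, Finset.mem_range] at hx
  have hxΛ : x ∈ Λ := by
    by_contra h
    exact hx.2 ((hGmem x).2 h)
  have : 2*g-1-t = x := by omega
  rwa [this]

lemma sgPrefix [DecidablePred (· ∈ Λ)] (hg : 1 ≤ g)
    (hadd : ∀ a b, a ∈ Λ → b ∈ Λ → a + b ∈ Λ) (hfin : Λᶜ.Finite)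
    (hinf : sInf {m : ℕ | ∀ n, m ≤ n → n ∈ Λ} = 2*g) :
    ∀ k, k ≤ g - 1 → 2 * ∑ i ∈ range k, (if 0 + i + 1 ∈ Λ then 1 else 0) ≤ k := by
  intro k hk
  rcases Nat.eq_zero_or_pos k with rfl | hk0
  · simp
  have hKne : {m | k ≤ m ∧ m ∉ Λ}.Nonempty :=
    ⟨2*g-1, ⟨by omega, sgB2 hg hfin hinf⟩⟩
  set u := sInf {m | k ≤ m ∧ m ∉ Λ} with hu
  have humem : k ≤ u ∧ u ∉ Λ := Nat.sInf_mem hKne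
  have humin : ∀ m, m < u → ¬(k ≤ m ∧ m ∉ Λ) := fun m hm => Nat.notMem_of_lt_sInf hm
  have hsum : ∑ i ∈ range k, (if 0 + i + 1 ∈ Λ then 1 else 0)
      = ((range k).filter (fun i => 0 + i + 1 ∈ Λ)).card := (Finset.card_filter _ _).symm
  rw [hsum]
  have hcards : ((range k).filter (fun i => 0 + i + 1 ∈ Λ)).card
      + ((range k).filter (fun i => ¬(0 + i + 1 ∈ Λ))).card = k := by
    rw [Finset.card_filter_add_card_filter_not, Finset.card_range]
  have hle : ((range k).filter (fun i => 0 + i + 1 ∈ Λ)).card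
      ≤ ((range k).filter (fun i => ¬(0 + i + 1 ∈ Λ))).card := by
    apply Finset.card_le_card_of_injOn (fun i => u - i - 2)
    · intro i hi
      rw [Finset.mem_coe, Finset.mem_filter, Finset.mem_range] at hi
      obtain ⟨hik, hiΛ⟩ := hi
      rw [Nat.zero_add] at hiΛ
      have hiu : i + 1 < u := by
        rcases Nat.lt_or_ge (i+1) u with h | h
        · exact h
        · exfalso
          rcases Nat.eq_or_lt_of_le h with heq' | hlt'
          · exact humem.2 (heq' ▸ hiΛ)
          · omega
      have hgap : u - (i+1) ∉ Λ := by
        intro hmem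
        have := hadd (i+1) (u - (i+1)) hiΛ hmem
        have he : (i+1) + (u - (i+1)) = u := by omega
        rw [he] at this
        exact humem.2 this
      have hlt : u - (i+1) < k := by
        by_contra h
        exact humin (u - (i+1)) (by omega) ⟨by omega, hgap⟩
      rw [Finset.mem_coe, Finset.mem_filter, Finset.mem_range]
      beta_reduce
      constructor
      · omega
      · rw [Nat.zero_add]
        have : u - i - 2 + 1 = u - (i+1) := by omega
        rw [this]
        exact hgap
    · intro x hx y hy hxy
      simp only [Finset.coe_filter, Set.mem_setOf_eq, Finset.mem_range] at hx hy
      -- need x + 1 < u, y + 1 < u to cancel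
      have hxu : x + 1 < u := by
        obtain ⟨hxk, hxΛ⟩ := hx
        rw [Nat.zero_add] at hxΛ
        have : x + 1 ≤ u := by omega
        rcases Nat.eq_or_lt_of_le this with heq' | hlt'
        · exact absurd (heq' ▸ hxΛ) humem.2
        · exact hlt'
      have hyu : y + 1 < u := by
        obtain ⟨hyk, hyΛ⟩ := hy
        rw [Nat.zero_add] at hyΛ
        have : y + 1 ≤ u := by omega
        rcases Nat.eq_or_lt_of_le this with heq' | hlt'
        · exact absurd (heq' ▸ hyΛ) humem.2
        · exact hlt'
      simp only at hxy
      omega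
  omega

end Semigroup
lemma listMem {Λ : Set ℕ} [DecidablePred (· ∈ Λ)] :
    ∀ (m s d : ℕ),
    (∀ k, k ≤ m → 2 * ∑ i ∈ range k, (if s + i + 1 ∈ Λ then 1 else 0) ≤ k + d) →
    ((List.range m).map (fun i => decide (s + i + 1 ∉ Λ))) ∈ pathsF m d := by
  intro m
  induction m with
  | zero =>
    intro s d _
    simp [pathsF]
  | succ m ih =>
    intro s d hyp
    have hlist : (List.range (m+1)).map (fun i => decide (s + i + 1 ∉ Λ))
        = (decide (s + 0 + 1 ∉ Λ)) :: (List.range m).map (fun i => decide ((s+1) + i + 1 ∉ Λ)) := by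
      rw [List.range_succ_eq_map, List.map_cons, List.map_map]
      congr 1
      apply List.map_congr_left
      intro a _
      simp only [Function.comp]
      have hx : s + (a + 1) + 1 = (s+1) + a + 1 := by omega
      simp only [Nat.succ_eq_add_one, hx]
    rw [hlist]
    have hshift : ∀ k, k ≤ m →
        ∑ i ∈ range (k+1), (if s + i + 1 ∈ Λ then 1 else 0)
        = (∑ i ∈ range k, (if (s+1) + i + 1 ∈ Λ then 1 else 0))
          + (if s + 0 + 1 ∈ Λ then 1 else 0) := by
      intro k _
      rw [Finset.sum_range_succ']
      congr 1
      apply Finset.sum_congr rfl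
      intro i _
      have hx : s + (i + 1) + 1 = (s+1) + i + 1 := by omega
      simp only [hx]
    by_cases hs : s + 1 ∈ Λ
    · -- head is false
      have hd : 1 ≤ d := by
        have := hyp 1 (by omega)
        rw [Finset.sum_range_one] at this
        have h01 : s + 0 + 1 = s + 1 := by omega
        rw [h01, if_pos hs] at this
        omega
      have htail : (List.range m).map (fun i => decide ((s+1) + i + 1 ∉ Λ)) ∈ pathsF m (d-1) := by
        apply ih
        intro k hk
        have := hyp (k+1) (by omega)
        rw [hshift k hk] at this
        have h01 : s + 0 + 1 = s + 1 := by omega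
        rw [h01, if_pos hs] at this
        omega
      have hhead : decide (s + 0 + 1 ∉ Λ) = false := by
        simp only [decide_eq_false_iff_not, Decidable.not_not]
        have h01 : s + 0 + 1 = s + 1 := by omega
        rw [h01]; exact hs
      rw [hhead]
      show _ ∈ pathsF (m+1) d
      rw [pathsF]
      apply Finset.mem_union_right
      rw [if_neg (by omega)]
      exact Finset.mem_image_of_mem _ htail
    · -- head is true
      have htail : (List.range m).map (fun i => decide ((s+1) + i + 1 ∉ Λ)) ∈ pathsF m (d+1) := by
        apply ih
        intro k hk
        have := hyp (k+1) (by omega)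
        rw [hshift k hk] at this
        have h01 : s + 0 + 1 = s + 1 := by omega
        rw [h01, if_neg hs] at this
        omega
      have hhead : decide (s + 0 + 1 ∉ Λ) = true := by
        simp only [decide_eq_true_eq]
        have h01 : s + 0 + 1 = s + 1 := by omega
        rw [h01]; exact hs
      rw [hhead]
      show _ ∈ pathsF (m+1) d
      rw [pathsF]
      apply Finset.mem_union_left
      exact Finset.mem_image_of_mem _ htail

section InjPart

lemma sgMono {g : ℕ} {Λ Λ' : Set ℕ}
    (h0 : 0 ∈ Λ) (hadd : ∀ a b, a ∈ Λ → b ∈ Λ → a + b ∈ Λ) (hfin : Λᶜ.Finite)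
    (hcard : Λᶜ.ncard = g) (hinf : sInf {m : ℕ | ∀ n, m ≤ n → n ∈ Λ} = 2*g)
    (h0' : 0 ∈ Λ') (hadd' : ∀ a b, a ∈ Λ' → b ∈ Λ' → a + b ∈ Λ') (hfin' : Λ'ᶜ.Finite)
    (hcard' : Λ'ᶜ.ncard = g) (hinf' : sInf {m : ℕ | ∀ n, m ≤ n → n ∈ Λ'} = 2*g)
    (hpt : ∀ i, i < g - 1 → (i + 1 ∈ Λ ↔ i + 1 ∈ Λ')) :
    ∀ n, n ∈ Λ → n ∈ Λ' := by
  intro n hn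
  rcases Nat.eq_zero_or_pos n with rfl | hn1
  · exact h0'
  by_cases hsmall : n ≤ g - 1
  · have hi : n - 1 < g - 1 := by omega
    have := (hpt (n-1) hi).1
    have he : n - 1 + 1 = n := by omega
    rw [he] at this
    exact this hn
  by_cases hbig : 2*g ≤ n
  · exact sgB1 hfin' hinf' n hbig
  -- now g ≤ n < 2g, hence g ≥ 1
  have hg : 1 ≤ g := by omega
  by_contra hn'
  have hm : 2*g - 1 - n ∈ Λ' := sgBwd hg hadd' hfin' hcard' hinf' n hn'
  rcases Nat.eq_zero_or_pos (2*g - 1 - n) with hm0 | hm1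
  · -- n = 2g - 1
    have hneq : n = 2*g - 1 := by omega
    rw [hneq] at hn
    exact sgB2 hg hfin hinf hn
  · have hmle : 2*g - 1 - n ≤ g - 1 := by omega
    have hi : (2*g - 1 - n) - 1 < g - 1 := by omega
    have hptm := (hpt ((2*g - 1 - n) - 1) hi).2
    have he : (2*g - 1 - n) - 1 + 1 = 2*g - 1 - n := by omega
    rw [he] at hptm
    have hmΛ : 2*g - 1 - n ∈ Λ := hptm hm
    have := hadd n (2*g - 1 - n) hn hmΛ
    have he2 : n + (2*g - 1 - n) = 2*g - 1 := by omega
    rw [he2] at this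
    exact sgB2 hg hfin hinf this

end InjPart

/-- The number of symmetric numerical semigroups of genus g
(those whose conductor, i.e. the least c with c + ℕ ⊆ Λ, equals 2g) is at most
C(g-1, ⌈(g-1)/2⌉). -/
theorem card_symmetric_numerical_semigroups_le (g : ℕ) :
    {Λ : Set ℕ | 0 ∈ Λ ∧ (∀ a b, a ∈ Λ → b ∈ Λ → a + b ∈ Λ) ∧
        Λᶜ.Finite ∧ Λᶜ.ncard = g ∧
        sInf {m : ℕ | ∀ n, m ≤ n → n ∈ Λ} = 2 * g}.ncard
      ≤ Nat.choose (g - 1) ((g - 1 + 1) / 2) := by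
  classical
  have hstep : {Λ : Set ℕ | 0 ∈ Λ ∧ (∀ a b, a ∈ Λ → b ∈ Λ → a + b ∈ Λ) ∧
        Λᶜ.Finite ∧ Λᶜ.ncard = g ∧
        sInf {m : ℕ | ∀ n, m ≤ n → n ∈ Λ} = 2 * g}.ncard
      ≤ (↑(pathsF (g-1) 0) : Set (List Bool)).ncard := by
    apply Set.ncard_le_ncard_of_injOn
      (fun Λ => (List.range (g-1)).map (fun i => decide (0 + i + 1 ∉ Λ)))
    · rintro Λ ⟨h0, hadd, hfin, hcard, hinf⟩
      rw [Finset.mem_coe]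
      apply listMem
      intro k hk
      rcases Nat.eq_zero_or_pos g with rfl | hg
      · have hk0 : k = 0 := by omega
        subst hk0
        simp
      · have := sgPrefix hg hadd hfin hinf k hk
        omega
    · rintro Λ ⟨h0, hadd, hfin, hcard, hinf⟩ Λ' ⟨h0', hadd', hfin', hcard', hinf'⟩ heq
      have hpt : ∀ i, i < g - 1 → (i + 1 ∈ Λ ↔ i + 1 ∈ Λ') := by
        intro i hi
        have h1 := congrArg (fun l => l[i]?) heq
        simp only [List.getElem?_map, List.getElem?_range hi, Option.map_some] at h1
        have h2 : decide (0 + i + 1 ∉ Λ) = decide (0 + i + 1 ∉ Λ') := Option.some.inj h1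
        rw [decide_eq_decide] at h2
        have h01 : 0 + i + 1 = i + 1 := by omega
        rw [h01] at h2
        exact not_iff_not.mp h2
      apply Set.eq_of_subset_of_subset
      · intro n hn
        exact sgMono h0 hadd hfin hcard hinf h0' hadd' hfin' hcard' hinf' hpt n hn
      · intro n hn
        exact sgMono h0' hadd' hfin' hcard' hinf' h0 hadd hfin hcard hinf
          (fun i hi => (hpt i hi).symm) n hn
  refine le_trans hstep ?_
  rw [Set.ncard_coe_finset, pathsF_card, Nat.sub_zero, Nat.add_zero, Finset.Icc_self,
    Finset.sum_singleton]
  have h1 : (g-1)/2 = (g-1) - ((g-1+1)/2) := by omega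
  rw [h1, Nat.choose_symm (by omega : (g-1+1)/2 ≤ g-1)]
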